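/- Let n ∈ (0,2), θ = (1/π)·arccos(n/2), γ₊ = 2^{3/2}·cos(πθ/2), γ₋ = γ₊ − (2^{3/2}/θ)·sin(πθ/2), and let r₊ be as in the context. Then ∫_0^∞ e^{−v}·r₊(v) dv = 1/2. -/

import Mathlib

open Real MeasureTheory Filter Topology intervalIntegral

/-- Real Beta integral. -/
lemma realBeta {p q : ℝ} (hp : 0 < p) (hq : 0 < q) :
    ∫ x in (0:ℝ)..1, x ^ (p - 1) * (1 - x) ^ (q - 1) =
      Real.Gamma p * Real.Gamma q / Real.Gamma (p + q) := by
  have h := Complex.Gamma_mul_Gamma_eq_betaIntegral (s := (p : ℂ)) (t := (q : ℂ))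
    (by simpa using hp) (by simpa using hq)
  have hB : Complex.betaIntegral (p : ℂ) (q : ℂ) =
      ((∫ x in (0:ℝ)..1, x ^ (p - 1) * (1 - x) ^ (q - 1) : ℝ) : ℂ) := by
    rw [Complex.betaIntegral, ← intervalIntegral.integral_ofReal]
    refine intervalIntegral.integral_congr fun x hx => ?_
    rw [Set.uIcc_of_le (by norm_num : (0:ℝ) ≤ 1)] at hx
    rw [Complex.ofReal_mul, Complex.ofReal_cpow hx.1,
      Complex.ofReal_cpow (by linarith [hx.2] : (0:ℝ) ≤ 1 - x)]
    push_cast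
    ring
  rw [hB] at h
  have hne : Real.Gamma (p + q) ≠ 0 := (Real.Gamma_pos_of_pos (by linarith)).ne'
  have : Complex.Gamma ((p : ℂ) + (q : ℂ)) = (Real.Gamma (p + q) : ℂ) := by
    rw [← Complex.ofReal_add, Complex.Gamma_ofReal]
  rw [this, Complex.Gamma_ofReal, Complex.Gamma_ofReal, ← Complex.ofReal_mul, ← Complex.ofReal_mul]
    at h
  have := Complex.ofReal_inj.mp h
  field_simp [hne]
  linarith [this]

/-- Integrability of `g x * (1-x)^q` on subintervals of `[0,1]` for continuous `g` and `q > -1`. -/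
lemma betaInt {q : ℝ} (hq : -1 < q) {g : ℝ → ℝ} (hg : Continuous g) (a b : ℝ) :
    IntervalIntegrable (fun x => g x * (1 - x) ^ q) volume a b := by
  have h1 : IntervalIntegrable (fun x : ℝ => x ^ q) volume (1 - a) (1 - b) :=
    intervalIntegral.intervalIntegrable_rpow' hq
  have h2 : IntervalIntegrable (fun x : ℝ => (1 - x) ^ q) volume a b := by
    simpa using h1.comp_sub_left 1
  exact h2.continuousOn_mul hg.continuousOn

lemma keyK {a : ℝ} (ha : 0 < a) (ha1 : a < 1) :
    ∫ z in (0:ℝ)..1, (2 * z - 1) * (z ^ a * (1 - z) ^ (-a)) =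
      a ^ 2 * π / Real.sin (π * a) := by
  have hcongr : ∀ z ∈ Set.uIcc (0:ℝ) 1,
      (2 * z - 1) * (z ^ a * (1 - z) ^ (-a)) =
        2 * (z ^ (a + 2 - 1) * (1 - z) ^ (1 - a - 1)) - z ^ (a + 1 - 1) * (1 - z) ^ (1 - a - 1) := by
    intro z hz
    rw [Set.uIcc_of_le (by norm_num : (0:ℝ) ≤ 1)] at hz
    have h1 : a + 2 - 1 = a + 1 := by ring
    have h2 : (1:ℝ) - a - 1 = -a := by ring
    have h3 : a + 1 - 1 = a := by ring
    rw [h1, h2, h3]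
    rcases eq_or_lt_of_le hz.1 with h | h
    · rw [← h]
      rw [Real.zero_rpow (by positivity), Real.zero_rpow (by linarith : a + 1 ≠ 0)]
      ring
    · rw [Real.rpow_add_one h.ne']
      ring
  rw [intervalIntegral.integral_congr hcongr]
  have hia : IntervalIntegrable (fun z : ℝ => 2 * (z ^ (a + 2 - 1) * (1 - z) ^ (1 - a - 1)))
      volume 0 1 := by
    have : Continuous fun z : ℝ => 2 * z ^ (a + 2 - 1) := by
      have : Continuous fun z : ℝ => z ^ (a + 2 - 1) := by
        apply Real.continuous_rpow_const; linarith
      exact continuous_const.mul this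
    simpa [mul_assoc] using betaInt (by linarith : (-1:ℝ) < 1 - a - 1) this 0 1
  have hib : IntervalIntegrable (fun z : ℝ => z ^ (a + 1 - 1) * (1 - z) ^ (1 - a - 1))
      volume 0 1 := by
    have : Continuous fun z : ℝ => z ^ (a + 1 - 1) := by
      apply Real.continuous_rpow_const; linarith
    exact betaInt (by linarith) this 0 1
  rw [intervalIntegral.integral_sub hia hib, intervalIntegral.integral_const_mul,
    realBeta (by linarith : (0:ℝ) < a + 2) (by linarith : (0:ℝ) < 1 - a),
    realBeta (by linarith : (0:ℝ) < a + 1) (by linarith : (0:ℝ) < 1 - a)]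
  have hG2 : Real.Gamma (a + 1 + (1 - a)) = 1 := by
    rw [show a + 1 + (1 - a) = (1:ℝ) + 1 by ring, Real.Gamma_add_one one_ne_zero, Real.Gamma_one,
      mul_one]
  have hG3 : Real.Gamma (a + 2 + (1 - a)) = 2 := by
    rw [show a + 2 + (1 - a) = (2:ℝ) + 1 by ring, Real.Gamma_add_one two_ne_zero,
      show (2:ℝ) = 1 + 1 by norm_num, Real.Gamma_add_one one_ne_zero, Real.Gamma_one]
    norm_num
  have hGa2 : Real.Gamma (a + 2) = (a + 1) * (a * Real.Gamma a) := by
    rw [show a + 2 = (a + 1) + 1 by ring, Real.Gamma_add_one (by linarith : a + 1 ≠ 0),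
      Real.Gamma_add_one ha.ne']
  have hGa1 : Real.Gamma (a + 1) = a * Real.Gamma a := Real.Gamma_add_one ha.ne'
  have hrefl : Real.Gamma a * Real.Gamma (1 - a) = π / Real.sin (π * a) :=
    Real.Gamma_mul_Gamma_one_sub a
  rw [hG3, hG2, hGa2, hGa1]
  have hsin : Real.sin (π * a) ≠ 0 := by
    have : 0 < Real.sin (π * a) :=
      Real.sin_pos_of_pos_of_lt_pi (by positivity) (by nlinarith [Real.pi_pos])
    exact this.ne'
  linear_combination a ^ 2 * hrefl

lemma keyJ {a : ℝ} (ha : 0 < a) (ha1 : a < 1) :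
    ∫ x in (0:ℝ)..1, x * ((1 + x) ^ a * (1 - x) ^ (-a) - (1 - x) ^ a * (1 + x) ^ (-a)) =
      2 * (a ^ 2 * π / Real.sin (π * a)) := by
  set F : ℝ → ℝ := fun x => x * ((1 + x) ^ a * (1 - x) ^ (-a)) with hF
  -- integrability pieces
  have hcont1 : Continuous fun x : ℝ => x * (1 + x) ^ a := by
    fun_prop (disch := intros; positivity)
  have hI01 : IntervalIntegrable F volume 0 1 := by
    have := betaInt (by linarith : (-1:ℝ) < -a) hcont1 0 1
    apply this.congr
    intro x _
    simp [F]; ring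
  have hIm0 : IntervalIntegrable F volume (-1) 0 := by
    apply ContinuousOn.intervalIntegrable
    rw [Set.uIcc_of_le (by norm_num : (-1:ℝ) ≤ 0)]
    have h1 : ContinuousOn (fun x : ℝ => (1 + x) ^ a) (Set.Icc (-1) 0) := by
      intro x hx
      exact (Real.continuousAt_rpow_const _ _ (Or.inr ha.le)).comp
        (by fun_prop) |>.continuousWithinAt
    have h2 : ContinuousOn (fun x : ℝ => (1 - x) ^ (-a)) (Set.Icc (-1:ℝ) 0) := by
      intro x hx
      refine (Real.continuousAt_rpow_const _ _ (Or.inl ?_)).comp (by fun_prop)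
        |>.continuousWithinAt
      simp only [Set.mem_Icc] at hx; intro h; linarith [hx.2]
    exact (continuousOn_id.mul (h1.mul h2))
  have h1 : IntervalIntegrable (fun x : ℝ => x * ((1 - x) ^ a * (1 + x) ^ (-a)))
      volume 0 1 := by
    apply ContinuousOn.intervalIntegrable
    rw [Set.uIcc_of_le (by norm_num : (0:ℝ) ≤ 1)]
    have ha2 : ContinuousOn (fun x : ℝ => (1 - x) ^ a) (Set.Icc (0:ℝ) 1) := by
      intro x hx
      exact (Real.continuousAt_rpow_const _ _ (Or.inr ha.le)).comp
        (by fun_prop) |>.continuousWithinAt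
    have hb2 : ContinuousOn (fun x : ℝ => (1 + x) ^ (-a)) (Set.Icc (0:ℝ) 1) := by
      intro x hx
      refine (Real.continuousAt_rpow_const _ _ (Or.inl ?_)).comp (by fun_prop)
        |>.continuousWithinAt
      simp only [Set.mem_Icc] at hx; intro h; linarith [hx.1]
    exact continuousOn_id.mul (ha2.mul hb2)
  have hFneg : ∀ x, F (-x) = -(x * ((1 - x) ^ a * (1 + x) ^ (-a))) := by
    intro x; simp only [F]; ring_nf
  have hneg : ∫ x in (0:ℝ)..1, x * ((1 - x) ^ a * (1 + x) ^ (-a)) =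
      - ∫ x in (-1:ℝ)..0, F x := by
    have h0 : (∫ x in (0:ℝ)..1, F (-x)) = ∫ x in (-1:ℝ)..0, F x := by
      rw [intervalIntegral.integral_comp_neg]; norm_num
    have h2 : (∫ x in (0:ℝ)..1, F (-x)) =
        -∫ x in (0:ℝ)..1, x * ((1 - x) ^ a * (1 + x) ^ (-a)) := by
      simp only [hFneg, intervalIntegral.integral_neg]
    linarith [h0, h2]
  have hsplit : (∫ x in (0:ℝ)..1, x * ((1 + x) ^ a * (1 - x) ^ (-a) -
      (1 - x) ^ a * (1 + x) ^ (-a))) = ∫ x in (-1:ℝ)..1, F x := by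
    have hc : (∫ x in (0:ℝ)..1, x * ((1 + x) ^ a * (1 - x) ^ (-a) -
        (1 - x) ^ a * (1 + x) ^ (-a))) =
        ∫ x in (0:ℝ)..1, (F x - x * ((1 - x) ^ a * (1 + x) ^ (-a))) := by
      refine intervalIntegral.integral_congr fun x hx => ?_
      simp only [F]; ring
    rw [hc, intervalIntegral.integral_sub hI01 h1, hneg,
      ← intervalIntegral.integral_add_adjacent_intervals hIm0 hI01]
    ring
  have hsub : (∫ x in (0:ℝ)..1, F (2 * x + -1)) = (2:ℝ)⁻¹ * ∫ x in (-1:ℝ)..1, F x := by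
    have := intervalIntegral.integral_comp_mul_add (a := (0:ℝ)) (b := 1) F
      (by norm_num : (2:ℝ) ≠ 0) (-1)
    norm_num at this
    convert this using 2 <;> norm_num
  have hkey : (∫ x in (0:ℝ)..1, F (2 * x + -1)) =
      ∫ z in (0:ℝ)..1, (2 * z - 1) * (z ^ a * (1 - z) ^ (-a)) := by
    refine intervalIntegral.integral_congr fun z hz => ?_
    rw [Set.uIcc_of_le (by norm_num : (0:ℝ) ≤ 1)] at hz
    simp only [F]
    have e1 : (1:ℝ) + (2 * z + -1) = 2 * z := by ring
    have e2 : (1:ℝ) - (2 * z + -1) = 2 * (1 - z) := by ring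
    rw [e1, e2, Real.mul_rpow (by norm_num) hz.1,
      Real.mul_rpow (by norm_num) (by linarith [hz.2])]
    have : (2:ℝ) ^ a * (2:ℝ) ^ (-a) = 1 := by
      rw [← Real.rpow_add (by norm_num : (0:ℝ) < 2)]; simp
    calc (2 * z + -1) * ((2:ℝ) ^ a * z ^ a * ((2:ℝ) ^ (-a) * (1 - z) ^ (-a)))
        = (2 * z - 1) * (((2:ℝ) ^ a * (2:ℝ) ^ (-a)) * (z ^ a * (1 - z) ^ (-a))) := by ring
      _ = (2 * z - 1) * (z ^ a * (1 - z) ^ (-a)) := by rw [this]; ring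
  rw [hsplit]
  have h2 : (∫ x in (-1:ℝ)..1, F x) = 2 * ∫ x in (0:ℝ)..1, F (2 * x + -1) := by
    rw [hsub]; ring
  rw [h2, hkey, keyK ha ha1]


/-- θ = (1/π)·arccos(n/2). -/
noncomputable def theta (n : ℝ) : ℝ := Real.arccos (n / 2) / π

/-- γ₊ = 2^{3/2}·cos(πθ/2). -/
noncomputable def gammaP (n : ℝ) : ℝ := (2 : ℝ) ^ ((3 : ℝ) / 2) * Real.cos (π * theta n / 2)

/-- γ₋ = γ₊ − (2^{3/2}/θ)·sin(πθ/2). -/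
noncomputable def gammaM (n : ℝ) : ℝ :=
  gammaP n - ((2 : ℝ) ^ ((3 : ℝ) / 2) / theta n) * Real.sin (π * theta n / 2)

/-- r₊(v) = ((γ₊−γ₋)/(√2·πθ)) · e^{−3v} · [ (e^{2v}+√(e^{4v}−1))^θ − (e^{2v}−√(e^{4v}−1))^θ ]. -/
noncomputable def rPlus (n : ℝ) (v : ℝ) : ℝ :=
  ((gammaP n - gammaM n) / (Real.sqrt 2 * π * theta n)) * Real.exp (-3 * v) *
    ((Real.exp (2 * v) + Real.sqrt (Real.exp (4 * v) - 1)) ^ theta n -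
      (Real.exp (2 * v) - Real.sqrt (Real.exp (4 * v) - 1)) ^ theta n)

set_option maxHeartbeats 2000000 in
/-- Normalisation (N̂): ∫_0^∞ e^{−v}·r₊(v) dv = 1/2. -/
theorem rPlus_normalisation (n : ℝ) (hn : n ∈ Set.Ioo (0 : ℝ) 2) :
    ∫ v in Set.Ioi (0 : ℝ), Real.exp (-v) * rPlus n v = 1 / 2 := by
  obtain ⟨hn0, hn2⟩ := hn
  set θ := theta n with hθdef
  have hπ := Real.pi_pos
  have hθ0 : 0 < θ := by
    have : 0 < Real.arccos (n / 2) := Real.arccos_pos.mpr (by linarith)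
    exact div_pos this hπ
  have hθhalf : θ < 1 / 2 := by
    have : Real.arccos (n / 2) < π / 2 := Real.arccos_lt_pi_div_two.mpr (by linarith)
    rw [hθdef, theta, div_lt_div_iff₀ hπ (by norm_num : (0:ℝ) < 2)]
    nlinarith
  set a := θ / 2 with hadef
  have ha0 : 0 < a := by positivity
  have ha1 : a < 1 := by rw [hadef]; linarith
  have hsin : 0 < Real.sin (π * a) :=
    Real.sin_pos_of_pos_of_lt_pi (by positivity) (by nlinarith)
  -- the substitution function
  set φ : ℝ → ℝ := fun v => Real.sqrt (1 - Real.exp (-4 * v)) with hφdef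
  set φ' : ℝ → ℝ := fun v => 2 * Real.exp (-4 * v) / Real.sqrt (1 - Real.exp (-4 * v)) with hφ'def
  set g : ℝ → ℝ := fun x => x * ((1 + x) ^ a * (1 - x) ^ (-a) - (1 - x) ^ a * (1 + x) ^ (-a))
    with hgdef
  have hE : ∀ v : ℝ, 0 < v → Real.exp (-4 * v) < 1 := fun v hv =>
    Real.exp_lt_one_iff.mpr (by linarith)
  have hφmem : ∀ v : ℝ, 0 < v → φ v ∈ Set.Ioo (0:ℝ) 1 := by
    intro v hv
    constructor
    · exact Real.sqrt_pos.mpr (by linarith [hE v hv, Real.exp_pos (-4 * v)])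
    · rw [show (1:ℝ) = Real.sqrt 1 by simp]
      exact Real.sqrt_lt_sqrt (by linarith [hE v hv]) (by linarith [Real.exp_pos (-4 * v)])
  have himage : φ '' Set.Ioi (0:ℝ) = Set.Ioo (0:ℝ) 1 := by
    ext x
    constructor
    · rintro ⟨v, hv, rfl⟩
      exact hφmem v hv
    · rintro ⟨hx0, hx1⟩
      refine ⟨-Real.log (1 - x ^ 2) / 4, ?_, ?_⟩
      · have h1 : (0:ℝ) < 1 - x ^ 2 := by nlinarith
        have h2 : 1 - x ^ 2 < 1 := by nlinarith
        have := Real.log_neg h1 h2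
        simp only [Set.mem_Ioi]
        linarith
      · have h1 : (0:ℝ) < 1 - x ^ 2 := by nlinarith
        simp only [hφdef]
        rw [show -4 * (-Real.log (1 - x ^ 2) / 4) = Real.log (1 - x ^ 2) by ring,
          Real.exp_log h1]
        rw [show (1:ℝ) - (1 - x ^ 2) = x ^ 2 by ring, Real.sqrt_sq hx0.le]
  have hinj : Set.InjOn φ (Set.Ioi (0:ℝ)) := by
    intro v1 h1 v2 h2 heq
    simp only [hφdef] at heq
    have h := congrArg (fun t : ℝ => t ^ 2) heq
    rw [Real.sq_sqrt (by linarith [hE v1 h1] : (0:ℝ) ≤ 1 - Real.exp (-4 * v1)),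
      Real.sq_sqrt (by linarith [hE v2 h2] : (0:ℝ) ≤ 1 - Real.exp (-4 * v2))] at h
    have := Real.exp_injective (by linarith : Real.exp (-4 * v1) = Real.exp (-4 * v2))
    linarith
  have hderiv : ∀ v ∈ Set.Ioi (0:ℝ), HasDerivWithinAt φ (φ' v) (Set.Ioi (0:ℝ)) v := by
    intro v hv
    have hEv := hE v hv
    have hEpos := Real.exp_pos (-4 * v)
    have h1 : HasDerivAt (fun v : ℝ => -4 * v) (-4) v := by
      simpa using (hasDerivAt_id v).const_mul (-4)
    have h2 := h1.exp
    have h3 := h2.const_sub 1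
    have hinner : HasDerivAt (fun v : ℝ => 1 - Real.exp (-4 * v)) (4 * Real.exp (-4 * v)) v := by
      exact h3.congr_deriv (by ring)
    have hs : HasDerivAt Real.sqrt (1 / (2 * Real.sqrt (1 - Real.exp (-4 * v))))
        (1 - Real.exp (-4 * v)) := Real.hasDerivAt_sqrt (by linarith)
    have hc := hs.comp v hinner
    have hsqpos : 0 < Real.sqrt (1 - Real.exp (-4 * v)) := Real.sqrt_pos.mpr (by linarith)
    have : φ' v = 1 / (2 * Real.sqrt (1 - Real.exp (-4 * v))) * (4 * Real.exp (-4 * v)) := by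
      simp only [hφ'def]
      field_simp
      ring
    rw [this]
    exact hc.hasDerivWithinAt
  set C := (gammaP n - gammaM n) / (Real.sqrt 2 * π * θ) with hC
  have hpt : ∀ v ∈ Set.Ioi (0:ℝ),
      Real.exp (-v) * rPlus n v = (C / 2) * (|φ' v| • g (φ v)) := by
    intro v hv
    simp only [Set.mem_Ioi] at hv
    have hEv := hE v hv
    have hEpos := Real.exp_pos (-4 * v)
    obtain ⟨hx0, hx1⟩ := hφmem v hv
    set x := φ v with hx
    set E := Real.exp (-4 * v) with hEdef
    have hx2 : x ^ 2 = 1 - E := by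
      simp only [hx, hφdef]
      rw [Real.sq_sqrt (by linarith)]
    have hE1 : (1 - x) * (1 + x) = E := by nlinarith
    have h1mx : (0:ℝ) < 1 - x := by linarith
    have h1px : (0:ℝ) < 1 + x := by linarith
    have hsqE : Real.sqrt E = Real.exp (-2 * v) := by
      have h2 : E = (Real.exp (-2 * v)) ^ 2 := by
        rw [hEdef, sq, ← Real.exp_add]; congr 1; ring
      rw [h2, Real.sqrt_sq (Real.exp_pos _).le]
    have hsqEpos : 0 < Real.sqrt E := Real.sqrt_pos.mpr hEpos
    have hu : Real.exp (2 * v) = 1 / Real.sqrt E := by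
      rw [hsqE, show (-2:ℝ) * v = -(2 * v) by ring, Real.exp_neg]
      simp
    have hss : Real.sqrt (Real.exp (4 * v) - 1) = x / Real.sqrt E := by
      have h4v : Real.exp (4 * v) = 1 / E := by
        rw [hEdef, show (-4:ℝ) * v = -(4 * v) by ring, Real.exp_neg]
        simp
      rw [h4v, show 1 / E - 1 = (1 - E) / E by field_simp,
        Real.sqrt_div (by linarith : (0:ℝ) ≤ 1 - E)]
    -- the two rpow identities
    have hrpθ : ∀ y : ℝ, 0 < y → (Real.sqrt y) ^ θ = y ^ a := by
      intro y hy
      rw [Real.sqrt_eq_rpow, ← Real.rpow_mul hy.le]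
      congr 1
      rw [hadef]; ring
    have hEa : (Real.sqrt E) ^ θ = (1 - x) ^ a * (1 + x) ^ a := by
      rw [hrpθ E hEpos, ← hE1, Real.mul_rpow h1mx.le h1px.le]
    have hθaa : ∀ y : ℝ, 0 < y → y ^ θ = y ^ a * y ^ a := by
      intro y hy
      rw [← Real.rpow_add hy]
      congr 1
      rw [hadef]; ring
    have hP : (Real.exp (2 * v) + Real.sqrt (Real.exp (4 * v) - 1)) ^ θ =
        (1 + x) ^ a * (1 - x) ^ (-a) := by
      rw [hu, hss, show 1 / Real.sqrt E + x / Real.sqrt E = (1 + x) / Real.sqrt E by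
          field_simp,
        Real.div_rpow h1px.le (Real.sqrt_nonneg E), hEa, hθaa _ h1px,
        Real.rpow_neg h1mx.le]
      have hne1 : (1 - x) ^ a ≠ 0 := (Real.rpow_pos_of_pos h1mx a).ne'
      have hne2 : (1 + x) ^ a ≠ 0 := (Real.rpow_pos_of_pos h1px a).ne'
      field_simp
    have hQ : (Real.exp (2 * v) - Real.sqrt (Real.exp (4 * v) - 1)) ^ θ =
        (1 - x) ^ a * (1 + x) ^ (-a) := by
      rw [hu, hss, show 1 / Real.sqrt E - x / Real.sqrt E = (1 - x) / Real.sqrt E by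
          field_simp,
        Real.div_rpow h1mx.le (Real.sqrt_nonneg E), hEa, hθaa _ h1mx,
        Real.rpow_neg h1px.le]
      have hne1 : (1 - x) ^ a ≠ 0 := (Real.rpow_pos_of_pos h1mx a).ne'
      have hne2 : (1 + x) ^ a ≠ 0 := (Real.rpow_pos_of_pos h1px a).ne'
      field_simp
    have hφ'pos : 0 < φ' v := by
      simp only [hφ'def]
      positivity
    have hgval : g x = x * ((Real.exp (2 * v) + Real.sqrt (Real.exp (4 * v) - 1)) ^ θ -
        (Real.exp (2 * v) - Real.sqrt (Real.exp (4 * v) - 1)) ^ θ) := by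
      rw [hgdef, hP, hQ]
    have hφ'val : φ' v = 2 * E / x := by
      simp only [hφ'def, hEdef, hx, hφdef]
    rw [abs_of_pos hφ'pos, smul_eq_mul, hgval, hφ'val]
    simp only [rPlus, ← hθdef, ← hC]
    rw [show Real.exp (-v) * (C * Real.exp (-3 * v) *
        ((Real.exp (2 * v) + Real.sqrt (Real.exp (4 * v) - 1)) ^ θ -
          (Real.exp (2 * v) - Real.sqrt (Real.exp (4 * v) - 1)) ^ θ)) =
        C * (Real.exp (-v) * Real.exp (-3 * v)) *
        ((Real.exp (2 * v) + Real.sqrt (Real.exp (4 * v) - 1)) ^ θ -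
          (Real.exp (2 * v) - Real.sqrt (Real.exp (4 * v) - 1)) ^ θ) by ring,
      ← Real.exp_add, show -v + -3 * v = -4 * v by ring, ← hEdef]
    have hxne : x ≠ 0 := hx0.ne'
    field_simp
  -- assemble
  rw [MeasureTheory.setIntegral_congr_fun measurableSet_Ioi hpt,
    MeasureTheory.integral_const_mul]
  have hcov : ∫ v in Set.Ioi (0:ℝ), |φ' v| • g (φ v) = ∫ x in Set.Ioo (0:ℝ) 1, g x := by
    rw [← himage, integral_image_eq_integral_abs_deriv_smul measurableSet_Ioi hderiv hinj g]
  rw [hcov]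
  have hval : ∫ x in Set.Ioo (0:ℝ) 1, g x = 2 * (a ^ 2 * π / Real.sin (π * a)) := by
    rw [← MeasureTheory.integral_Ioc_eq_integral_Ioo,
      ← intervalIntegral.integral_of_le (by norm_num : (0:ℝ) ≤ 1)]
    exact keyJ ha0 ha1
  rw [hval]
  -- final arithmetic
  have hCval : C = 2 * Real.sin (π * a) / (π * θ ^ 2) := by
    rw [hC]
    have hgpm : gammaP n - gammaM n =
        ((2:ℝ) ^ ((3:ℝ)/2) / θ) * Real.sin (π * θ / 2) := by
      simp [gammaM, hθdef]
    have h32 : (2:ℝ) ^ ((3:ℝ)/2) = 2 * Real.sqrt 2 := by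
      rw [show (3:ℝ)/2 = 1 + 1/2 by norm_num, Real.rpow_add (by norm_num : (0:ℝ) < 2),
        Real.rpow_one, ← Real.sqrt_eq_rpow]
    have hsin2 : Real.sin (π * θ / 2) = Real.sin (π * a) := by
      congr 1
      rw [hadef]; ring
    rw [hgpm, h32, hsin2]
    have hsq2 : (0:ℝ) < Real.sqrt 2 := Real.sqrt_pos.mpr (by norm_num)
    field_simp
  rw [hCval, hadef]
  have hs2 : Real.sin (π * θ / 2) ≠ 0 := by
    have h := hsin.ne'
    rw [hadef] at h
    rwa [show π * (θ / 2) = π * θ / 2 by ring] at h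
  have hs3 : Real.sin (π * (θ / 2)) ≠ 0 := by
    rwa [show π * (θ / 2) = π * θ / 2 by ring]
  field_simp [hs2, hs3]
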